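/- Let α, γ > 0 and let f : ℝ → ℝ be the sum of a power series centered at 0 with infinite radius of convergence (i.e., f(x) = Σ_{k=0}^∞ a_k x^k for all real x), and suppose that the even derivatives at 0 satisfy |f^(2p)(0)| ≤ α·γ^(2p) for every integer p ≥ 1. Then for every r with 0 < r and 2γr ≤ 3, the variance of f under the uniform distribution on [−r, r] satisfies Var[f] := (1/(2r))∫_{−r}^{r} f(θ)² dθ − ( (1/(2r))∫_{−r}^{r} f(θ) dθ )² ≥ (r⁴/45)·(f''(0))² − (α²γ⁶/270)·r⁶. -/

import Mathlib

open Filter intervalIntegral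

lemma stmt3_nat (p : ℕ) :
    1260 * 36 ^ p * (p + 2) ≤ 3 * (2 * p + 5) * (2 * p + 7) * Nat.factorial (2 * p + 4) := by
  induction p with
  | zero => simp [Nat.factorial]
  | succ n ih =>
    have h1 : 2 * (n + 1) + 4 = (2 * n + 4) + 2 := by ring
    rw [h1, Nat.factorial_succ, Nat.factorial_succ]
    have h2 : 36 * (n + 3) ≤ (2 * n + 9) * (2 * n + 6) * (n + 2) := by
      nlinarith [n.zero_le, sq_nonneg n, Nat.mul_le_mul (Nat.le_refl n) (Nat.le_refl n)]
    calc 1260 * 36 ^ (n + 1) * (n + 1 + 2)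
        = 1260 * 36 ^ n * (36 * (n + 3)) := by ring
      _ ≤ 1260 * 36 ^ n * ((2 * n + 9) * (2 * n + 6) * (n + 2)) := by
          exact Nat.mul_le_mul_left _ h2
      _ = (2 * n + 9) * (2 * n + 6) * (1260 * 36 ^ n * (n + 2)) := by ring
      _ ≤ (2 * n + 9) * (2 * n + 6) * (3 * (2 * n + 5) * (2 * n + 7) * Nat.factorial (2 * n + 4)) := by
          exact Nat.mul_le_mul_left _ ih
      _ = 3 * (2 * (n + 1) + 5) * (2 * (n + 1) + 7) *
          ((2 * n + 4 + 2) * ((2 * n + 4 + 1) * Nat.factorial (2 * n + 4))) := by ring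

set_option maxHeartbeats 1000000 in
/-- Let `f : ℝ → ℝ` be the sum of an everywhere-convergent power series
centered at `0`, with even derivatives at `0` satisfying `|f^(2p)(0)| ≤ α·γ^(2p)` for all
`p ≥ 1`.  Then for `0 < r` with `2γr ≤ 3`, the variance of `f` under the uniform
distribution on `[−r, r]` is at least `(r⁴/45)·(f''(0))² − (α²γ⁶/270)·r⁶`. -/
theorem stmt3 (α γ : ℝ) (hα : 0 < α) (hγ : 0 < γ)
    (f : ℝ → ℝ) (a : ℕ → ℝ)
    (hf : ∀ x : ℝ, HasSum (fun k : ℕ => a k * x ^ k) (f x))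
    (hderiv : ∀ p : ℕ, 1 ≤ p → |iteratedDeriv (2 * p) f 0| ≤ α * γ ^ (2 * p))
    (r : ℝ) (hr : 0 < r) (hrγ : 2 * γ * r ≤ 3) :
    (1 / (2 * r)) * (∫ θ in (-r)..r, (f θ) ^ 2)
        - ((1 / (2 * r)) * ∫ θ in (-r)..r, f θ) ^ 2 ≥
      (r ^ 4 / 45) * (iteratedDeriv 2 f 0) ^ 2 - (α ^ 2 * γ ^ 6 / 270) * r ^ 6 := by
  -- ## Power series structure
  have hball : HasFPowerSeriesOnBall f (FormalMultilinearSeries.ofScalars ℝ a) 0 ⊤ := by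
    constructor
    · rw [top_le_iff]
      refine ENNReal.eq_top_of_forall_nnreal_le fun s => ?_
      apply FormalMultilinearSeries.le_radius_of_tendsto (l := 0)
      have h0 : Tendsto (fun n => a n * (s : ℝ) ^ n) atTop (nhds 0) :=
        (hf s).summable.tendsto_atTop_zero
      have h1 : Tendsto (fun n => |a n * (s : ℝ) ^ n|) atTop (nhds 0) := by
        simpa using h0.abs
      apply squeeze_zero (fun n => by positivity) (g := fun n => |a n * (s : ℝ) ^ n|) _ h1
      intro n
      simp only [abs_mul, abs_pow, NNReal.abs_eq, FormalMultilinearSeries.ofScalars_norm,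
        Real.norm_eq_abs]
      exact le_refl _
    · exact ENNReal.zero_lt_top
    · intro y _
      have := hf y
      simp only [FormalMultilinearSeries.coeff, FormalMultilinearSeries.ofScalars_apply_eq,
        smul_eq_mul]
      simpa [mul_comm] using this
  have hit : ∀ n : ℕ, iteratedDeriv n f 0 = (n.factorial : ℝ) * a n := by
    intro n
    have := hball.factorial_smul (1 : ℝ) n
    rw [iteratedDeriv_eq_iteratedFDeriv, ← this, FormalMultilinearSeries.ofScalars_apply_eq]
    simp [mul_comm]
  have hcont : Continuous f := by
    rw [← continuousOn_univ]
    simpa using hball.continuousOn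
  set c : ℝ := a 2 with hc
  have hc2 : iteratedDeriv 2 f 0 = 2 * c := by
    rw [hit 2]; norm_num [Nat.factorial]; exact hc.symm
  have hcabs : |c| ≤ α * γ ^ 2 / 2 := by
    have := hderiv 1 le_rfl
    rw [show 2 * 1 = 2 by norm_num] at this
    rw [hc2, abs_mul] at this
    simp only [abs_two] at this
    rw [show γ ^ (2 : ℕ) = γ ^ 2 from rfl] at this
    linarith
  -- coefficient bounds
  have haq : ∀ s : ℕ, |a (2 * s + 4)| ≤ α * γ ^ (2 * s + 4) / ((2 * s + 4).factorial : ℝ) := by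
    intro s
    have h := hderiv (s + 2) (by omega)
    rw [show 2 * (s + 2) = 2 * s + 4 by ring] at h
    rw [hit (2 * s + 4), abs_mul, abs_of_nonneg (by positivity : (0:ℝ) ≤ ((2 * s + 4).factorial : ℝ))] at h
    rw [le_div_iff₀ (by positivity)]
    linarith [h]
  -- ## The integral S = ∫ f·(θ² - r²/3) as a sum
  set J : ℕ → ℝ := fun k =>
    (r ^ (k + 3) - (-r) ^ (k + 3)) / ((k : ℝ) + 3)
      - r ^ 2 / 3 * ((r ^ (k + 1) - (-r) ^ (k + 1)) / ((k : ℝ) + 1)) with hJdef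
  set S : ℝ := ∫ θ in (-r)..r, f θ * (θ ^ 2 - r ^ 2 / 3) with hSdef
  have hJ : ∀ k : ℕ, (∫ θ in (-r)..r, a k * θ ^ k * (θ ^ 2 - r ^ 2 / 3)) = a k * J k := by
    intro k
    have hrw : ∀ θ : ℝ, a k * θ ^ k * (θ ^ 2 - r ^ 2 / 3)
        = a k * θ ^ (k + 2) - a k * r ^ 2 / 3 * θ ^ k := by intro θ; ring
    simp_rw [hrw]
    rw [integral_sub
        ((continuous_const.fun_mul (continuous_pow (k+2))).intervalIntegrable _ _)
        ((continuous_const.fun_mul (continuous_pow k)).intervalIntegrable _ _),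
      integral_const_mul, integral_const_mul, integral_pow, integral_pow]
    simp only [hJdef]
    push_cast
    ring
  have hS : HasSum (fun k => a k * J k) S := by
    -- uniform bound via coefficient decay
    obtain ⟨C, hC⟩ := ((hf (2 * r)).summable.tendsto_atTop_zero.abs).bddAbove_range
    have hCb : ∀ n : ℕ, |a n| * r ^ n ≤ C * (1 / 2) ^ n := by
      intro n
      have h1 : |a n * (2 * r) ^ n| ≤ C := hC ⟨n, rfl⟩
      rw [abs_mul, abs_pow, abs_of_nonneg (by linarith : (0:ℝ) ≤ 2 * r), mul_pow] at h1
      rw [div_pow, one_pow, mul_one_div, le_div_iff₀ (by positivity)]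
      calc |a n| * r ^ n * 2 ^ n = |a n| * (2 ^ n * r ^ n) := by ring
        _ ≤ C := h1
    have hC0 : 0 ≤ C :=
      le_trans (by positivity : (0:ℝ) ≤ |a 0| * r ^ 0) (by simpa using hCb 0)
    have key := hasSum_integral_of_dominated_convergence
      (μ := MeasureTheory.volume) (a := -r) (b := r)
      (F := fun k θ => a k * θ ^ k * (θ ^ 2 - r ^ 2 / 3))
      (f := fun θ => f θ * (θ ^ 2 - r ^ 2 / 3))
      (bound := fun k _ => C * (1 / 2) ^ k * r ^ 2)
      (fun k => ((continuous_const.mul (continuous_pow k)).mul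
        ((continuous_pow 2).sub continuous_const)).aestronglyMeasurable)
      (fun k => by
        filter_upwards with θ hθ
        have hθ' : θ ∈ Set.Ioc (-r) r := by
          rwa [Set.uIoc_of_le (by linarith : -r ≤ r)] at hθ
        have habs : |θ| ≤ r := abs_le.mpr ⟨hθ'.1.le, hθ'.2⟩
        have hsq : θ ^ 2 ≤ r ^ 2 := sq_le_sq' (by linarith [hθ'.1]) hθ'.2
        have h2 : |θ ^ 2 - r ^ 2 / 3| ≤ r ^ 2 :=
          abs_le.mpr ⟨by nlinarith [sq_nonneg θ, sq_nonneg r], by nlinarith [sq_nonneg r]⟩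
        rw [Real.norm_eq_abs, abs_mul, abs_mul, abs_pow]
        calc |a k| * |θ| ^ k * |θ ^ 2 - r ^ 2 / 3|
            ≤ |a k| * r ^ k * r ^ 2 := by
              gcongr
          _ ≤ C * (1 / 2) ^ k * r ^ 2 := by gcongr ?_ * r ^ 2; exact hCb k)
      (by
        filter_upwards with θ hθ
        apply Summable.mul_right
        apply Summable.mul_left
        exact summable_geometric_of_lt_one (by norm_num) (by norm_num))
      (by apply _root_.intervalIntegrable_const)
      (by
        filter_upwards with θ hθ
        exact (hf θ).mul_right _)
    simp_rw [hJ] at key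
    exact key
  -- values of J
  have hJ2 : J 2 = 8 / 45 * r ^ 5 := by
    simp only [hJdef]
    norm_num
    ring
  have hJval : ∀ s : ℕ, J (2 * s + 4)
      = 8 * ((s : ℝ) + 2) * r ^ (2 * s + 7) / (3 * (2 * (s : ℝ) + 5) * (2 * (s : ℝ) + 7)) := by
    intro s
    have ho7 : (-r) ^ (2 * s + 4 + 3) = -r ^ (2 * s + 4 + 3) := Odd.neg_pow ⟨s + 3, by ring⟩ r
    have ho5 : (-r) ^ (2 * s + 4 + 1) = -r ^ (2 * s + 4 + 1) := Odd.neg_pow ⟨s + 2, by ring⟩ r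
    simp only [hJdef, ho7, ho5]
    push_cast
    rw [show 2 * s + 4 + 3 = 2 * s + 7 by ring, show 2 * s + 4 + 1 = 2 * s + 5 by ring]
    field_simp
    ring
  -- tail sum
  set T : ℝ := S - c * J 2 with hTdef
  have hT : HasSum (fun s : ℕ => a (2 * s + 4) * J (2 * s + 4)) T := by
    have h1 := hS.update 2 0
    have h2 : (0 : ℝ) - (a 2 * J 2) + S = T := by rw [hTdef, hc]; ring
    rw [h2] at h1
    have hinj : Function.Injective (fun s : ℕ => 2 * s + 4) := by
      intro x y h
      have h' : 2 * x + 4 = 2 * y + 4 := h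
      omega
    have hvan : ∀ k ∉ Set.range (fun s : ℕ => 2 * s + 4),
        Function.update (fun k => a k * J k) 2 0 k = 0 := by
      intro k hk
      by_cases hk2 : k = 2
      · subst hk2; simp
      · rw [Function.update_of_ne hk2]
        rcases Nat.even_or_odd k with ⟨m, hm⟩ | ⟨m, hm⟩
        · -- even: k = m + m; must have m = 0 or m = 1
          have hm2 : m = 0 ∨ m = 1 := by
            by_contra hcon
            push_neg at hcon
            refine hk ⟨m - 2, ?_⟩
            show 2 * (m - 2) + 4 = k
            omega
          rcases hm2 with h | h
          · subst h; simp at hm; subst hm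
            simp only [hJdef]
            norm_num
            right
            ring
          · subst h; omega
        · -- odd
          have he3 : Even (k + 3) := ⟨m + 2, by omega⟩
          have he1 : Even (k + 1) := ⟨m + 1, by omega⟩
          have h3 : (-r) ^ (k + 3) = r ^ (k + 3) := he3.neg_pow r
          have h1' : (-r) ^ (k + 1) = r ^ (k + 1) := he1.neg_pow r
          simp only [hJdef, h3, h1']
          simp
    have h3 := (Function.Injective.hasSum_iff hinj hvan).mpr h1
    have hfun : (Function.update (fun k => a k * J k) 2 0) ∘ (fun s : ℕ => 2 * s + 4)
        = fun s : ℕ => a (2 * s + 4) * J (2 * s + 4) := by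
      funext s
      have hne : (2 * s + 4 : ℕ) ≠ 2 := by omega
      exact Function.update_of_ne hne _ _
    rwa [hfun] at h3
  -- per-term bound
  set M : ℝ := 2 * α * γ ^ 4 * r ^ 7 / 315 with hMdef
  have hM0 : 0 ≤ M := by positivity
  have hterm : ∀ s : ℕ, |a (2 * s + 4) * J (2 * s + 4)| ≤ M * (1 / 16) ^ s := by
    intro s
    have hJpos : 0 ≤ J (2 * s + 4) := by rw [hJval s]; positivity
    rw [abs_mul, abs_of_nonneg hJpos]
    have hnat : (1260 : ℝ) * 36 ^ s * ((s : ℝ) + 2)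
        ≤ 3 * (2 * (s : ℝ) + 5) * (2 * (s : ℝ) + 7) * ((2 * s + 4).factorial : ℝ) := by
      exact_mod_cast stmt3_nat s
    have hgr : ((γ * r) ^ 2) ^ s ≤ (9 / 4 : ℝ) ^ s := by
      apply pow_le_pow_left₀ (by positivity)
      nlinarith [mul_pos hγ hr]
    have hfrac : 8 * ((s : ℝ) + 2) / (3 * (2 * (s : ℝ) + 5) * (2 * (s : ℝ) + 7)
        * ((2 * s + 4).factorial : ℝ)) ≤ (2 / 315) * (1 / 36) ^ s := by
      rw [div_le_iff₀ (by positivity)]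
      have h36 : ((1 : ℝ) / 36) ^ s * 36 ^ s = 1 := by
        rw [← mul_pow]; norm_num
      have hmul := mul_le_mul_of_nonneg_left hnat
        (by positivity : (0:ℝ) ≤ (2 / 315) * (1 / 36) ^ s)
      have he : (2 / 315 : ℝ) * (1 / 36) ^ s * (1260 * 36 ^ s * ((s : ℝ) + 2))
          = 8 * ((s : ℝ) + 2) * ((1 / 36 : ℝ) ^ s * 36 ^ s) := by ring
      rw [he, h36, mul_one] at hmul
      linarith [hmul]
    calc |a (2 * s + 4)| * J (2 * s + 4)
        ≤ (α * γ ^ (2 * s + 4) / ((2 * s + 4).factorial : ℝ)) * J (2 * s + 4) := by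
          gcongr; exact haq s
      _ = α * ((γ * r) ^ 2) ^ s * (γ ^ 4 * r ^ 7)
            * (8 * ((s : ℝ) + 2) / (3 * (2 * (s : ℝ) + 5) * (2 * (s : ℝ) + 7)
              * ((2 * s + 4).factorial : ℝ))) := by
          rw [hJval s]
          have hfact : (0:ℝ) < ((2 * s + 4).factorial : ℝ) := by positivity
          field_simp
          ring
      _ ≤ α * (9 / 4 : ℝ) ^ s * (γ ^ 4 * r ^ 7) * ((2 / 315) * (1 / 36) ^ s) := by
          gcongr
      _ = (2 * α * γ ^ 4 * r ^ 7 / 315) * ((9 / 4 : ℝ) ^ s * (1 / 36 : ℝ) ^ s) := by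
          ring
      _ = M * (1 / 16) ^ s := by
          rw [show ((9:ℝ)/4) ^ s * ((1:ℝ)/36) ^ s = ((1:ℝ)/16) ^ s by
            rw [← mul_pow]; norm_num, hMdef]
  -- ## bound on the tail T
  have hgeo : HasSum (fun s : ℕ => M * (1 / 16 : ℝ) ^ s) (M * (16 / 15)) := by
    have h := hasSum_geometric_of_lt_one (by norm_num : (0:ℝ) ≤ 1/16) (by norm_num : (1/16:ℝ) < 1)
    have h2 := h.mul_left M
    rw [show (16 / 15 : ℝ) = (1 - 1 / 16)⁻¹ by norm_num]
    exact h2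
  have hTub : T ≤ M * (16 / 15) :=
    hasSum_le (fun s => (le_abs_self _).trans (hterm s)) hT hgeo
  have hTlb : -(M * (16 / 15)) ≤ T := by
    have hneg := hgeo.neg
    refine hasSum_le (fun s => ?_) hneg hT
    exact le_trans (neg_le_neg (hterm s)) (neg_abs_le _)
  have hTabs : |T| ≤ M * (16 / 15) := abs_le.mpr ⟨hTlb, hTub⟩
  -- ## quadratic expansion
  set F : ℝ := ∫ θ in (-r)..r, f θ with hFdef
  set A : ℝ := ∫ θ in (-r)..r, (f θ) ^ 2 with hAdef
  set m : ℝ := 1 / (2 * r) * F with hmdef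
  have ch : Continuous (fun θ : ℝ => θ ^ 2 - r ^ 2 / 3) :=
    (continuous_pow 2).sub continuous_const
  have key0 : (0:ℝ) ≤ ∫ θ in (-r)..r, (f θ - m - c * (θ ^ 2 - r ^ 2 / 3)) ^ 2 :=
    integral_nonneg (by linarith) (fun u _ => sq_nonneg _)
  have hpoly : (∫ θ in (-r)..r, (m ^ 2 + 2 * m * c * (θ ^ 2 - r ^ 2 / 3)
      + c ^ 2 * (θ ^ 2 - r ^ 2 / 3) ^ 2))
      = 2 * r * m ^ 2 + 8 / 45 * c ^ 2 * r ^ 5 := by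
    have hrw2 : ∀ θ : ℝ, m ^ 2 + 2 * m * c * (θ ^ 2 - r ^ 2 / 3)
        + c ^ 2 * (θ ^ 2 - r ^ 2 / 3) ^ 2
        = c ^ 2 * θ ^ 4 + (2 * m * c - 2 / 3 * c ^ 2 * r ^ 2) * θ ^ 2
          + (m ^ 2 - 2 / 3 * m * c * r ^ 2 + c ^ 2 * r ^ 4 / 9) := fun θ => by ring
    simp_rw [hrw2]
    rw [integral_add (((continuous_const.fun_mul (continuous_pow 4)).fun_add
          (continuous_const.fun_mul (continuous_pow 2))).intervalIntegrable _ _)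
        (intervalIntegrable_const),
      integral_add ((continuous_const.fun_mul (continuous_pow 4)).intervalIntegrable _ _)
        ((continuous_const.fun_mul (continuous_pow 2)).intervalIntegrable _ _),
      integral_const_mul, integral_const_mul, integral_pow, integral_pow, integral_const]
    push_cast
    ring_nf
  have hsplit : (∫ θ in (-r)..r, (f θ - m - c * (θ ^ 2 - r ^ 2 / 3)) ^ 2)
      = A - 2 * m * F - 2 * c * S + (2 * r * m ^ 2 + 8 / 45 * c ^ 2 * r ^ 5) := by
    have hrw : ∀ θ : ℝ, (f θ - m - c * (θ ^ 2 - r ^ 2 / 3)) ^ 2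
        = (f θ) ^ 2 - 2 * m * f θ - 2 * c * (f θ * (θ ^ 2 - r ^ 2 / 3))
          + (m ^ 2 + 2 * m * c * (θ ^ 2 - r ^ 2 / 3)
            + c ^ 2 * (θ ^ 2 - r ^ 2 / 3) ^ 2) := fun θ => by ring
    simp_rw [hrw]
    rw [integral_add
        ((((hcont.fun_pow 2).fun_sub (continuous_const.fun_mul hcont)).fun_sub
          (continuous_const.fun_mul (hcont.fun_mul ch))).intervalIntegrable _ _)
        ((((continuous_const.fun_add
            (continuous_const.fun_mul ch)).fun_add
          (continuous_const.fun_mul (ch.fun_pow 2)))).intervalIntegrable _ _),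
      integral_sub
        (((hcont.fun_pow 2).fun_sub (continuous_const.fun_mul hcont)).intervalIntegrable _ _)
        ((continuous_const.fun_mul (hcont.fun_mul ch)).intervalIntegrable _ _),
      integral_sub ((hcont.fun_pow 2).intervalIntegrable _ _)
        ((continuous_const.fun_mul hcont).intervalIntegrable _ _),
      integral_const_mul, integral_const_mul, hpoly]
  -- ## final assembly
  have hF2 : F = 2 * r * m := by
    rw [hmdef]
    field_simp
  have hS' : S = c * (8 / 45 * r ^ 5) + T := by
    rw [hTdef, hJ2]; ring
  clear_value c J S T M F A m
  have hcT : -(α ^ 2 * γ ^ 6 / 270) * r ^ 7 ≤ c * T := by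
    have h1 : |c * T| ≤ (α * γ ^ 2 / 2) * (M * (16 / 15)) := by
      rw [abs_mul]
      exact mul_le_mul hcabs hTabs (abs_nonneg _) (by positivity)
    have h2 : (α * γ ^ 2 / 2) * (M * (16 / 15)) = 16 / 4725 * (α ^ 2 * γ ^ 6 * r ^ 7) := by
      rw [hMdef]; ring
    have h3 : (16 : ℝ) / 4725 * (α ^ 2 * γ ^ 6 * r ^ 7) ≤ 1 / 270 * (α ^ 2 * γ ^ 6 * r ^ 7) := by
      have : (0:ℝ) ≤ α ^ 2 * γ ^ 6 * r ^ 7 := by positivity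
      nlinarith
    have h4 := neg_abs_le (c * T)
    rw [h2] at h1
    linarith
  have hA' : 0 ≤ A - 2 * m * F - 2 * c * S + (2 * r * m ^ 2 + 8 / 45 * c ^ 2 * r ^ 5) := by
    rw [← hsplit]; exact key0
  rw [hF2, hS'] at hA'
  rw [hc2, ge_iff_le, ← sub_nonneg]
  set X : ℝ := r ^ 4 / 45 * (2 * c) ^ 2 - α ^ 2 * γ ^ 6 / 270 * r ^ 6 with hXdef
  have hchain : 0 ≤ A - 2 * r * m ^ 2 - 2 * r * X := by
    rw [hXdef]
    nlinarith [hA', hcT]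

  have hpos : (0:ℝ) < 1 / (2 * r) := by positivity
  have hmul := mul_nonneg hpos.le hchain
  have hid : 1 / (2 * r) * (A - 2 * r * m ^ 2 - 2 * r * X)
      = 1 / (2 * r) * A - m ^ 2 - X := by
    rw [hmdef]
    field_simp
  rw [hid] at hmul
  linarith
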